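/- For positive integers d, a, n with a ≤ d+1 and n ≥ a, the number of partitions with perimeter n into parts ≡ a (mod d+1) equals the sum over k from 0 to ⌊(n-a)/(d+1)⌋ of C(n - a - kd, n - a - kd - k). -/

import Mathlib

/-- A partition: a nonempty, nonincreasing list of positive integers. -/
def IsPartition (l : List ℕ) : Prop :=
  l ≠ [] ∧ l.Pairwise (· ≥ ·) ∧ ∀ x ∈ l, 0 < x

/-- Perimeter: (largest part) + (number of parts) - 1. -/
def perimeter (l : List ℕ) : ℕ := l.headI + l.length - 1

/-- d-distinct: consecutive parts differ by at least d. -/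
def DDistinct (d : ℕ) (l : List ℕ) : Prop := l.Chain' (fun x y => y + d ≤ x)

lemma elem_decomp (d a x : ℕ) (ha : 0 < a) (had : a ≤ d + 1) (hx : 0 < x)
    (hm : x % (d + 1) = a % (d + 1)) :
    a ≤ x ∧ x = a + ((x - a) / (d + 1)) * (d + 1) := by
  have hax : a ≤ x := by
    rcases Nat.lt_or_ge a (d + 1) with h | h
    · have h1 : x % (d + 1) = a := by rw [hm, Nat.mod_eq_of_lt h]
      have := Nat.mod_le x (d + 1)
      omega
    · have haeq : a = d + 1 := le_antisymm had h
      have h0 : x % (d + 1) = 0 := by rw [hm, haeq, Nat.mod_self]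
      have := Nat.le_of_dvd hx (Nat.dvd_of_mod_eq_zero h0)
      omega
  have hdvd : (d + 1) ∣ (x - a) := (Nat.modEq_iff_dvd' hax).mp hm.symm
  refine ⟨hax, ?_⟩
  rw [Nat.div_mul_cancel hdvd]
  omega

lemma headI_cons_tail {l : List ℕ} (h : l ≠ []) : l.headI :: l.tail = l := by
  cases l with
  | nil => exact absurd rfl h
  | cons x xs => rfl

lemma tail_sorted {l : List ℕ} (h : l.Pairwise (· ≥ ·)) : l.tail.Pairwise (· ≥ ·) := by
  cases l with
  | nil => simp
  | cons x xs => exact (List.pairwise_cons.mp h).2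

lemma tail_le_headI {l : List ℕ} (h : l.Pairwise (· ≥ ·)) : ∀ x ∈ l.tail, x ≤ l.headI := by
  cases l with
  | nil => simp
  | cons y xs => exact fun x hx => (List.pairwise_cons.mp h).1 x hx

theorem stmt18 (d a n : ℕ) (hd : 0 < d) (ha : 0 < a) (hn : 0 < n)
    (had : a ≤ d + 1) (hna : a ≤ n) :
    Nat.card {l : List ℕ // IsPartition l ∧ perimeter l = n ∧
        ∀ x ∈ l, x % (d + 1) = a % (d + 1)}
      = ∑ k ∈ Finset.range ((n - a) / (d + 1) + 1),
          Nat.choose (n - a - k * d) (n - a - k * d - k) := by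
  have hD : 0 < d + 1 := Nat.succ_pos d
  set K := (n - a) / (d + 1) with hK
  -- facts about members
  have hfacts : ∀ l : List ℕ, IsPartition l → perimeter l = n →
      (∀ x ∈ l, x % (d + 1) = a % (d + 1)) →
      l.headI = a + ((l.headI - a) / (d + 1)) * (d + 1) ∧
      ((l.headI - a) / (d + 1)) * (d + 1) ≤ n - a ∧
      l.tail.length = n - a - ((l.headI - a) / (d + 1)) * (d + 1) ∧
      (l.headI - a) / (d + 1) ≤ K := by
    intro l hl hp hm
    obtain ⟨hne, hsort, hpos⟩ := hl
    have hmem : l.headI ∈ l := by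
      cases l with
      | nil => exact absurd rfl hne
      | cons x xs => exact List.mem_cons_self
    obtain ⟨hax, hdec⟩ := elem_decomp d a l.headI ha had (hpos _ hmem) (hm _ hmem)
    have hlen : 1 ≤ l.length := List.length_pos_iff.mpr hne
    have hper : l.headI + l.length - 1 = n := hp
    have h2 : ((l.headI - a) / (d + 1)) * (d + 1) ≤ n - a := by omega
    have hlK : (l.headI - a) / (d + 1) ≤ K := by
      rw [hK]
      exact Nat.div_le_div_right (by omega)
    have htl : l.tail.length = l.length - 1 := by simp
    exact ⟨hdec, h2, by omega, hlK⟩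
  -- the forward map
  let fwd : {l : List ℕ // IsPartition l ∧ perimeter l = n ∧
      ∀ x ∈ l, x % (d + 1) = a % (d + 1)} →
      (k : Fin (K + 1)) × Sym (Fin (k.1 + 1)) (n - a - k.1 * (d + 1)) :=
    fun p =>
      ⟨⟨min ((p.1.headI - a) / (d + 1)) K, Nat.lt_succ_of_le (min_le_right _ _)⟩,
       ⟨(↑p.1.tail : Multiset ℕ).map
          (fun x => (⟨min ((x - a) / (d + 1)) (min ((p.1.headI - a) / (d + 1)) K),
            Nat.lt_succ_of_le (min_le_right _ _)⟩ : Fin (min ((p.1.headI - a) / (d + 1)) K + 1))),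
        by
          obtain ⟨hl, hp, hm⟩ := p.2
          obtain ⟨h1, h2, h3, h4⟩ := hfacts p.1 hl hp hm
          show Multiset.card _ = n - a - (min ((p.1.headI - a) / (d + 1)) K) * (d + 1)
          rw [Multiset.card_map, Multiset.coe_card, min_eq_left h4]
          exact h3⟩⟩
  -- flattening map, injective
  let flat : ((k : Fin (K + 1)) × Sym (Fin (k.1 + 1)) (n - a - k.1 * (d + 1))) →
      ℕ × Multiset ℕ := fun p => (p.1.1, p.2.1.map Fin.val)
  have flat_inj : Function.Injective flat := by
    rintro ⟨⟨k₁, h₁⟩, s₁, hs₁⟩ ⟨⟨k₂, h₂⟩, s₂, hs₂⟩ h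
    simp only [flat, Prod.mk.injEq] at h
    obtain ⟨hk, hs⟩ := h
    subst hk
    have : s₁ = s₂ := Multiset.map_injective Fin.val_injective hs
    subst this
    rfl
  -- map back on tails
  have tail_eq : ∀ (l : List ℕ), IsPartition l →
      (∀ x ∈ l, x % (d + 1) = a % (d + 1)) →
      Multiset.map (fun y => a + y * (d + 1))
        (Multiset.map (fun x => min ((x - a) / (d + 1)) ((l.headI - a) / (d + 1)))
          (↑l.tail : Multiset ℕ))
        = (↑l.tail : Multiset ℕ) := by
    intro l hl hm
    rw [Multiset.map_map]
    have : Multiset.map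
        ((fun y => a + y * (d + 1)) ∘
          (fun x => min ((x - a) / (d + 1)) ((l.headI - a) / (d + 1))))
        (↑l.tail : Multiset ℕ) = Multiset.map id (↑l.tail : Multiset ℕ) := by
      refine Multiset.map_congr rfl ?_
      intro x hx
      rw [Multiset.mem_coe] at hx
      have hxl : x ∈ l := List.mem_of_mem_tail hx
      obtain ⟨hax, hdec⟩ := elem_decomp d a x ha had (hl.2.2 _ hxl) (hm _ hxl)
      have hxh : x ≤ l.headI := tail_le_headI hl.2.1 x hx
      have hle : (x - a) / (d + 1) ≤ (l.headI - a) / (d + 1) :=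
        Nat.div_le_div_right (by omega)
      simp only [Function.comp, min_eq_left hle, id]
      omega
    rw [this, Multiset.map_id]
  have hbij : Function.Bijective fwd := by
    constructor
    · rintro ⟨l₁, hl₁, hp₁, hm₁⟩ ⟨l₂, hl₂, hp₂, hm₂⟩ heq
      have hflat := congrArg flat heq
      simp only [flat, fwd, Multiset.map_map, Prod.mk.injEq, Function.comp] at hflat
      obtain ⟨hfst, hsnd⟩ := hflat
      obtain ⟨h11, h12, h13, h14⟩ := hfacts l₁ hl₁ hp₁ hm₁
      obtain ⟨h21, h22, h23, h24⟩ := hfacts l₂ hl₂ hp₂ hm₂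
      rw [min_eq_left h14, min_eq_left h24] at hfst hsnd
      have hhead : l₁.headI = l₂.headI := by
        rw [h11, hfst]; exact h21.symm
      have htails : (↑l₁.tail : Multiset ℕ) = (↑l₂.tail : Multiset ℕ) := by
        calc (↑l₁.tail : Multiset ℕ)
            = Multiset.map (fun y => a + y * (d + 1))
                (Multiset.map (fun x => min ((x - a) / (d + 1)) ((l₁.headI - a) / (d + 1)))
                  (↑l₁.tail : Multiset ℕ)) := (tail_eq l₁ hl₁ hm₁).symm
          _ = Multiset.map (fun y => a + y * (d + 1))
                (Multiset.map (fun x => min ((x - a) / (d + 1)) ((l₂.headI - a) / (d + 1)))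
                  (↑l₂.tail : Multiset ℕ)) := by rw [hsnd]
          _ = (↑l₂.tail : Multiset ℕ) := tail_eq l₂ hl₂ hm₂
      have hperm : l₁.tail.Perm l₂.tail := Multiset.coe_eq_coe.mp htails
      have htail : l₁.tail = l₂.tail :=
        List.Perm.eq_of_pairwise' (tail_sorted hl₁.2.1) (tail_sorted hl₂.2.1) hperm
      apply Subtype.ext
      show l₁ = l₂
      rw [← headI_cons_tail hl₁.1, ← headI_cons_tail hl₂.1, hhead, htail]
    · rintro ⟨⟨k, hk⟩, s, hs⟩
      have hkK : k ≤ K := Nat.lt_succ_iff.mp hk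
      have hkd : k * (d + 1) ≤ n - a := by
        calc k * (d + 1) ≤ K * (d + 1) := Nat.mul_le_mul_right _ hkK
          _ ≤ n - a := by rw [hK]; exact Nat.div_mul_le_self _ _
      set t : List ℕ := Multiset.sort (s.map (fun j => a + j.1 * (d + 1))) (· ≥ ·) with ht
      have hmem_t : ∀ x ∈ t, ∃ j : Fin (k + 1), x = a + j.1 * (d + 1) := by
        intro x hx
        rw [ht, Multiset.mem_sort, Multiset.mem_map] at hx
        obtain ⟨j, _, hj⟩ := hx
        exact ⟨j, hj.symm⟩
      have hpart : IsPartition ((a + k * (d + 1)) :: t) := by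
        refine ⟨by simp, ?_, ?_⟩
        · rw [List.pairwise_cons]
          constructor
          · intro b hb
            obtain ⟨j, hj⟩ := hmem_t b hb
            have hj1 : j.1 ≤ k := Nat.lt_succ_iff.mp j.2
            have : j.1 * (d + 1) ≤ k * (d + 1) := Nat.mul_le_mul_right _ hj1
            omega
          · exact Multiset.pairwise_sort _ _
        · intro x hx
          rw [List.mem_cons] at hx
          rcases hx with h | h
          · omega
          · obtain ⟨j, hj⟩ := hmem_t x h; omega
      have hlen : t.length = n - a - k * (d + 1) := by
        rw [ht, Multiset.length_sort, Multiset.card_map, hs]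
      have hperi : perimeter ((a + k * (d + 1)) :: t) = n := by
        rw [perimeter]
        simp only [List.headI_cons, List.length_cons, hlen]
        omega
      have hmod : ∀ x ∈ (a + k * (d + 1)) :: t, x % (d + 1) = a % (d + 1) := by
        intro x hx
        rw [List.mem_cons] at hx
        rcases hx with h | h
        · rw [h, Nat.add_mul_mod_self_right]
        · obtain ⟨j, hj⟩ := hmem_t x h
          rw [hj, Nat.add_mul_mod_self_right]
      refine ⟨⟨(a + k * (d + 1)) :: t, hpart, hperi, hmod⟩, ?_⟩
      apply flat_inj
      have hjval : ((a + k * (d + 1)) - a) / (d + 1) = k := by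
        rw [Nat.add_sub_cancel_left, Nat.mul_div_cancel _ hD]
      simp only [flat, fwd, Multiset.map_map, List.headI_cons, List.tail_cons,
        Prod.mk.injEq, hjval, min_eq_left hkK]
      have hts : (↑t : Multiset ℕ) = Multiset.map (fun j => a + j.1 * (d + 1)) s := by
        rw [ht]; exact Multiset.sort_eq _ _
      constructor
      · trivial
      · rw [hts, Multiset.map_map]
        refine Multiset.map_congr rfl ?_
        intro j hj
        have hj1 : j.1 ≤ k := Nat.lt_succ_iff.mp j.2
        simp only [Function.comp, Nat.add_sub_cancel_left, Nat.mul_div_cancel _ hD,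
          min_eq_left hj1]
  rw [Nat.card_eq_of_bijective fwd hbij, Nat.card_eq_fintype_card, Fintype.card_sigma,
    Fin.sum_univ_eq_sum_range (fun k => Fintype.card (Sym (Fin (k + 1)) (n - a - k * (d + 1))))]
  refine Finset.sum_congr rfl ?_
  intro k hkr
  rw [Finset.mem_range] at hkr
  have hkK : k ≤ K := Nat.lt_succ_iff.mp hkr
  have hkd : k * (d + 1) ≤ n - a := by
    calc k * (d + 1) ≤ K * (d + 1) := Nat.mul_le_mul_right _ hkK
      _ ≤ n - a := by rw [hK]; exact Nat.div_mul_le_self _ _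
  rw [Sym.card_sym_eq_multichoose, Fintype.card_fin, Nat.multichoose_eq]
  have e1 : k * (d + 1) = k * d + k := by ring
  congr 1 <;> omega
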